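/- arXiv:2306.09927 — 5 statements merged into one kernel-verified Lean document; each statement's English description precedes it below -/
import Mathlib

section
/- Let $\Lambda \in \mathbb{R}^{d\times d}$ be symmetric positive definite and $\Gamma = (1+\tfrac{1}{N})\Lambda + \tfrac{1}{N}\operatorname{tr}(\Lambda) I_d$. Then the infimum of $\tilde\ell(U, u) = \operatorname{tr}\big[\tfrac{1}{2} u^2 \Gamma\Lambda U \Lambda U^\top - u \Lambda^2 U^\top\big]$ over $U \in \mathbb{R}^{d\times d}$ and $u \in \mathbb{R}$ is attained and equals $-\tfrac{1}{2}\operatorname{tr}(\Lambda^2 \Gamma^{-1})$. -/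
open Matrix

section Aux
variable {n : Type*} [Fintype n]

lemma psd_smul' {M : Matrix n n ℝ} (hM : M.PosSemidef) {c : ℝ} (hc : 0 ≤ c) :
    (c • M).PosSemidef := by
  refine ⟨?_, fun x => ?_⟩
  · unfold Matrix.IsHermitian
    rw [conjTranspose_smul, hM.1]
    simp
  · exact (hM.smul hc).2 x

lemma psd_diag_nonneg' {M : Matrix n n ℝ} [DecidableEq n] (hM : M.PosSemidef) (i : n) :
    0 ≤ M i i := by
  exact hM.diag_nonneg

lemma psd_trace_nonneg' {M : Matrix n n ℝ} [DecidableEq n] (hM : M.PosSemidef) : 0 ≤ M.trace :=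
  Finset.sum_nonneg fun i _ => psd_diag_nonneg' hM i

lemma psd_trace_mul_nonneg' {A B : Matrix n n ℝ} [DecidableEq n]
    (hA : A.PosSemidef) (hB : B.PosSemidef) : 0 ≤ (A * B).trace := by
  obtain ⟨C, hC⟩ : ∃ C : Matrix n n ℝ, A = Cᴴ * C := by
    open scoped MatrixOrder Matrix.Norms.L2Operator in
    obtain ⟨C, hC⟩ := CStarAlgebra.nonneg_iff_eq_star_mul_self.mp hA.nonneg
    exact ⟨C, hC⟩
  have h1 : (A * B).trace = (C * B * Cᴴ).trace := by
    rw [hC, mul_assoc, trace_mul_comm]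
  rw [h1]
  exact psd_trace_nonneg' (hB.mul_mul_conjTranspose_same C)
end Aux

/-- The infimum of `ℓ̃(U,u) = tr[½u²ΓΛUΛUᵀ - uΛ²Uᵀ]` is attained and equals
`-½ tr(Λ²Γ⁻¹)`. -/
theorem loss_infimum {d : ℕ} (N : ℕ) (hN : 1 ≤ N)
    (Λ Γ : Matrix (Fin d) (Fin d) ℝ) (hΛ : Λ.PosDef)
    (hΓdef : Γ = (1 + (N : ℝ)⁻¹) • Λ + ((N : ℝ)⁻¹ * Λ.trace) • (1 : Matrix (Fin d) (Fin d) ℝ)) :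
    IsLeast (Set.range fun p : Matrix (Fin d) (Fin d) ℝ × ℝ =>
        ((1/2 * p.2^2) • (Γ * Λ * p.1 * Λ * p.1ᵀ) - p.2 • (Λ * Λ * p.1ᵀ)).trace)
      (-(1/2) * (Λ * Λ * Γ⁻¹).trace) := by
  have hct : Λᴴ = Λᵀ := conjTranspose_eq_transpose_of_trivial Λ
  have hΛt : Λᵀ = Λ := by rw [← hct]; exact hΛ.isHermitian
  have hΓt : Γᵀ = Γ := by
    rw [hΓdef]; simp [transpose_add, transpose_smul, hΛt]
  have hcomm : Γ * Λ = Λ * Γ := by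
    rw [hΓdef]; simp [add_mul, mul_add, smul_mul_assoc, mul_smul_comm]
  have htr : 0 ≤ Λ.trace := psd_trace_nonneg' hΛ.posSemidef
  have hc : (0:ℝ) ≤ (N : ℝ)⁻¹ * Λ.trace := by positivity
  have hcpos : (0:ℝ) < 1 + (N : ℝ)⁻¹ := by positivity
  have hΓ : Γ.PosDef := by
    rw [hΓdef]
    refine Matrix.PosDef.add_posSemidef ?_ (psd_smul' Matrix.PosSemidef.one hc)
    refine ⟨?_, fun x hx => ?_⟩
    · unfold Matrix.IsHermitian
      rw [conjTranspose_smul, hΛ.isHermitian.eq]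
      simp
    · exact (hΛ.smul hcpos).2 hx
  have hdet : IsUnit Γ.det := isUnit_iff_ne_zero.mpr hΓ.det_pos.ne'
  have hΓΓi : Γ * Γ⁻¹ = 1 := mul_nonsing_inv Γ hdet
  have hΓiΓ : Γ⁻¹ * Γ = 1 := nonsing_inv_mul Γ hdet
  have hGit : Γ⁻¹ᵀ = Γ⁻¹ := by rw [transpose_nonsing_inv, hΓt]
  have hkey : Γ * Λ * Γ⁻¹ = Λ := by rw [hcomm, mul_assoc, hΓΓi, mul_one]
  have hΛΛ : (Λ * Λ).PosSemidef := by
    have := posSemidef_conjTranspose_mul_self Λ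
    rwa [hΛ.isHermitian.eq] at this
  have hGL : (Γ * Λ).PosSemidef := by
    rw [hΓdef, add_mul, smul_mul_assoc, smul_mul_assoc, one_mul]
    exact (psd_smul' hΛΛ hcpos.le).add (psd_smul' hΛ.posSemidef hc)
  constructor
  · exact ⟨(Γ⁻¹, 1), by
      simp only [hGit, hkey, one_pow, mul_one, one_smul, trace_sub, trace_smul, smul_eq_mul]
      ring⟩
  · rintro x ⟨p, rfl⟩
    obtain ⟨U, u⟩ := p
    simp only
    set V : Matrix (Fin d) (Fin d) ℝ := u • U with hV
    set W : Matrix (Fin d) (Fin d) ℝ := V - Γ⁻¹ with hW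
    have hWt : Wᵀ = Vᵀ - Γ⁻¹ := by rw [hW, transpose_sub, hGit]
    have hE : Γ * Λ * W * Λ * Wᵀ =
        Γ * Λ * V * Λ * Vᵀ - Γ * Λ * V * Λ * Γ⁻¹ - (Λ * Λ * Vᵀ - Λ * Λ * Γ⁻¹) := by
      rw [hWt, hW]
      rw [show Γ * Λ * (V - Γ⁻¹) = Γ * Λ * V - Λ from by rw [mul_sub, hkey]]
      rw [sub_mul, sub_mul, mul_sub, mul_sub]
    have hWpsd : (W * Λ * Wᵀ).PosSemidef := by
      have := hΛ.posSemidef.mul_mul_conjTranspose_same W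
      rwa [conjTranspose_eq_transpose_of_trivial] at this
    have hEnn : 0 ≤ (Γ * Λ * W * Λ * Wᵀ).trace := by
      rw [show Γ * Λ * W * Λ * Wᵀ = (Γ * Λ) * (W * Λ * Wᵀ) from by
        simp only [Matrix.mul_assoc]]
      exact psd_trace_mul_nonneg' hGL hWpsd
    have h2 : (Γ * Λ * V * Λ * Γ⁻¹).trace = (Λ * Λ * Vᵀ).trace := by
      rw [trace_mul_comm]
      rw [show Γ⁻¹ * (Γ * Λ * V * Λ) = Λ * V * Λ from by
        simp only [← Matrix.mul_assoc]; rw [hΓiΓ, one_mul]]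
      rw [trace_mul_comm, ← Matrix.mul_assoc]
      conv_rhs => rw [← trace_transpose]
      simp only [transpose_mul, transpose_transpose, hΛt]
      rw [Matrix.mul_assoc, trace_mul_comm, ← Matrix.mul_assoc]
      rw [Matrix.mul_assoc, trace_mul_comm]
    have hEtr : (Γ * Λ * W * Λ * Wᵀ).trace =
        (Γ * Λ * V * Λ * Vᵀ).trace - 2 * (Λ * Λ * Vᵀ).trace + (Λ * Λ * Γ⁻¹).trace := by
      rw [hE, trace_sub, trace_sub, trace_sub, h2]; ring
    have hV1 : (Γ * Λ * V * Λ * Vᵀ).trace = u^2 * (Γ * Λ * U * Λ * Uᵀ).trace := by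
      rw [hV, transpose_smul]
      simp only [Matrix.mul_smul, Matrix.smul_mul, trace_smul, smul_eq_mul]
      ring
    have hV2 : (Λ * Λ * Vᵀ).trace = u * (Λ * Λ * Uᵀ).trace := by
      rw [hV, transpose_smul, Matrix.mul_smul, trace_smul, smul_eq_mul]
    rw [trace_sub, trace_smul, trace_smul, smul_eq_mul, smul_eq_mul]
    rw [hEtr, hV1, hV2] at hEnn
    nlinarith [hEnn]
end

section
/- Let $\Lambda \in \mathbb{R}^{d\times d}$ be symmetric positive definite and $\Gamma = (1+\tfrac{1}{N})\Lambda + \tfrac{1}{N}\operatorname{tr}(\Lambda) I_d$. Any global minimizer $(U, u)$ of $\tilde\ell(U,u) = \operatorname{tr}\big[\tfrac{1}{2} u^2 \Gamma\Lambda U \Lambda U^\top - u\Lambda^2 U^\top\big]$ satisfies $u\, U = \Gamma^{-1}$. -/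
open Matrix

section aux

variable {d : ℕ}

lemma myHerm_transpose {M : Matrix (Fin d) (Fin d) ℝ} (hM : M.IsHermitian) : Mᵀ = M := by
  have := hM.eq; rwa [conjTranspose_eq_transpose_of_trivial] at this

lemma myPosDef_smul {M : Matrix (Fin d) (Fin d) ℝ} (hM : M.PosDef) {c : ℝ} (hc : 0 < c) :
    (c • M).PosDef := by
  refine posDef_iff_dotProduct_mulVec.mpr ⟨?_, fun x hx => ?_⟩
  · unfold Matrix.IsHermitian
    rw [conjTranspose_smul]
    simp [myHerm_transpose hM.1]
  · rw [smul_mulVec, dotProduct_smul]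
    exact mul_pos hc (hM.dotProduct_mulVec_pos hx)

lemma myPosSemidef_smul {M : Matrix (Fin d) (Fin d) ℝ} (hM : M.PosSemidef) {c : ℝ} (hc : 0 ≤ c) :
    (c • M).PosSemidef := by
  refine posSemidef_iff_dotProduct_mulVec.mpr ⟨?_, fun x => ?_⟩
  · unfold Matrix.IsHermitian
    rw [conjTranspose_smul]
    simp [myHerm_transpose hM.1]
  · rw [smul_mulVec, dotProduct_smul]
    exact mul_nonneg hc (hM.dotProduct_mulVec_nonneg x)

lemma myPosDef_sq {Λ : Matrix (Fin d) (Fin d) ℝ} (hΛ : Λ.PosDef) : (Λ * Λ).PosDef := by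
  have hsymm : Λᵀ = Λ := myHerm_transpose hΛ.1
  refine posDef_iff_dotProduct_mulVec.mpr ⟨?_, fun x hx => ?_⟩
  · show (Λ * Λ)ᴴ = Λ * Λ
    simp [conjTranspose_mul, conjTranspose_eq_transpose_of_trivial, hsymm]
  · have hx' : Λ *ᵥ x ≠ 0 := by
      intro h
      apply hx
      have h2 : Λ⁻¹ *ᵥ (Λ *ᵥ x) = x := by
        rw [mulVec_mulVec, nonsing_inv_mul _ (isUnit_iff_ne_zero.mpr hΛ.det_pos.ne'), one_mulVec]
      rw [h, mulVec_zero] at h2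
      exact h2.symm
    have hdp : star x ⬝ᵥ (Λ * Λ) *ᵥ x = (Λ *ᵥ x) ⬝ᵥ (Λ *ᵥ x) := by
      rw [star_trivial, ← mulVec_mulVec, dotProduct_mulVec]
      congr 1
      rw [← hsymm, vecMul_transpose, hsymm]
    rw [hdp]
    have h0 : 0 ≤ (Λ *ᵥ x) ⬝ᵥ (Λ *ᵥ x) := by
      rw [dotProduct]
      exact Finset.sum_nonneg fun i _ => mul_self_nonneg _
    exact lt_of_le_of_ne h0 fun h => hx' (dotProduct_self_eq_zero.mp h.symm)

lemma mytrace_sq_nonneg (Y : Matrix (Fin d) (Fin d) ℝ) : 0 ≤ (Y * Yᵀ).trace := by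
  have : (Y * Yᵀ).trace = ∑ i, ∑ j, (Y i j)^2 := by
    simp [Matrix.trace, Matrix.diag, Matrix.mul_apply, sq]
  rw [this]
  exact Finset.sum_nonneg fun i _ => Finset.sum_nonneg fun j _ => sq_nonneg _

lemma mytrace_sq_eq_zero {Y : Matrix (Fin d) (Fin d) ℝ} (h : (Y * Yᵀ).trace = 0) : Y = 0 := by
  have ht : (Y * Yᵀ).trace = ∑ i, ∑ j, (Y i j)^2 := by
    simp [Matrix.trace, Matrix.diag, Matrix.mul_apply, sq]
  rw [ht] at h
  ext i j
  have h1 := (Finset.sum_eq_zero_iff_of_nonneg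
    (fun i _ => Finset.sum_nonneg fun j _ => sq_nonneg (Y i j))).mp h i (Finset.mem_univ i)
  have h2 := (Finset.sum_eq_zero_iff_of_nonneg
    (fun j _ => sq_nonneg (Y i j))).mp h1 j (Finset.mem_univ j)
  simpa using (pow_eq_zero_iff two_ne_zero).mp h2

open scoped MatrixOrder in
noncomputable def Matrix.PosSemidef.sqrt {M : Matrix (Fin d) (Fin d) ℝ} (_ : M.PosSemidef) :
    Matrix (Fin d) (Fin d) ℝ := CFC.sqrt M

open scoped MatrixOrder in
lemma Matrix.PosSemidef.sqrt_mul_self {M : Matrix (Fin d) (Fin d) ℝ} (hM : M.PosSemidef) :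
    hM.sqrt * hM.sqrt = M := CFC.sqrt_mul_sqrt_self M hM.nonneg

open scoped MatrixOrder in
lemma Matrix.PosSemidef.posSemidef_sqrt {M : Matrix (Fin d) (Fin d) ℝ} (hM : M.PosSemidef) :
    hM.sqrt.PosSemidef := nonneg_iff_posSemidef.mp (CFC.sqrt_nonneg M)

end aux

/-- Any global minimizer `(U, u)` of `ℓ̃(U,u) = tr[½u²ΓΛUΛUᵀ - uΛ²Uᵀ]` satisfies
`u U = Γ⁻¹`. -/
theorem global_min_eq_inv {d : ℕ} (N : ℕ) (hN : 1 ≤ N)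
    (Λ Γ : Matrix (Fin d) (Fin d) ℝ) (hΛ : Λ.PosDef)
    (hΓdef : Γ = (1 + (N : ℝ)⁻¹) • Λ + ((N : ℝ)⁻¹ * Λ.trace) • (1 : Matrix (Fin d) (Fin d) ℝ))
    (U : Matrix (Fin d) (Fin d) ℝ) (u : ℝ)
    (hmin : ∀ (V : Matrix (Fin d) (Fin d) ℝ) (v : ℝ),
      ((1/2 * u^2) • (Γ * Λ * U * Λ * Uᵀ) - u • (Λ * Λ * Uᵀ)).trace
        ≤ ((1/2 * v^2) • (Γ * Λ * V * Λ * Vᵀ) - v • (Λ * Λ * Vᵀ)).trace) :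
    u • U = Γ⁻¹ := by
  have hΛs : Λᵀ = Λ := myHerm_transpose hΛ.1
  have ha : (0:ℝ) < 1 + (N : ℝ)⁻¹ := by positivity
  have htr : (0:ℝ) ≤ Λ.trace := by
    rw [Matrix.trace]
    refine Finset.sum_nonneg fun i _ => ?_
    have := hΛ.posSemidef.dotProduct_mulVec_nonneg (Pi.single i 1)
    simpa [Matrix.mulVec_single, dotProduct, Pi.single_apply] using this
  have hc : (0:ℝ) ≤ (N : ℝ)⁻¹ * Λ.trace := by positivity
  have hΓpos : Γ.PosDef := by
    rw [hΓdef]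
    exact (myPosDef_smul hΛ ha).add_posSemidef (myPosSemidef_smul Matrix.PosSemidef.one hc)
  have hΓs : Γᵀ = Γ := myHerm_transpose hΓpos.1
  have hΓdet : IsUnit Γ.det := isUnit_iff_ne_zero.mpr hΓpos.det_pos.ne'
  have hcomm : Γ * Λ = Λ * Γ := by
    rw [hΓdef]
    simp only [add_mul, mul_add, smul_mul_assoc, mul_smul_comm, one_mul, mul_one]
  set g := Γ⁻¹ with hg
  have hΓg : Γ * g = 1 := mul_nonsing_inv Γ hΓdet
  have hgΓ : g * Γ = 1 := nonsing_inv_mul Γ hΓdet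
  have hgs : gᵀ = g := by rw [hg, transpose_nonsing_inv, hΓs]
  have hgcomm : g * Λ = Λ * g := by
    calc g * Λ = g * Λ * (Γ * g) := by rw [hΓg, mul_one]
    _ = g * ((Λ * Γ) * g) := by simp only [mul_assoc]
    _ = g * ((Γ * Λ) * g) := by rw [hcomm]
    _ = (g * Γ) * (Λ * g) := by simp only [mul_assoc]
    _ = Λ * g := by rw [hgΓ, one_mul]
  have hMpos : (Γ * Λ).PosDef := by
    have h : Γ * Λ = (1 + (N : ℝ)⁻¹) • (Λ * Λ) + ((N : ℝ)⁻¹ * Λ.trace) • Λ := by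
      rw [hΓdef, add_mul, smul_mul_assoc, smul_mul_assoc, one_mul]
    rw [h]
    exact (myPosDef_smul (myPosDef_sq hΛ) ha).add_posSemidef
      (myPosSemidef_smul hΛ.posSemidef hc)
  set W := u • U with hW
  set D := W - g with hD
  have hΓΛg : Γ * Λ * g = Λ := by rw [mul_assoc, ← hgcomm, ← mul_assoc, hΓg, one_mul]
  have key : (Γ * Λ * D * Λ * Dᵀ).trace ≤ 0 := by
    have h1 := hmin g 1
    have ht3 : (Γ * Λ * g * Λ * gᵀ) = Λ * Λ * gᵀ := by rw [hΓΛg]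
    have hRHS : ((1/2 * (1:ℝ)^2) • (Γ * Λ * g * Λ * gᵀ) - (1:ℝ) • (Λ * Λ * gᵀ)).trace
        = -(1/2) * (Λ * Λ * gᵀ).trace := by
      rw [ht3, trace_sub, trace_smul, trace_smul]
      simp
      ring
    have hcross1 : (Γ * Λ * W * Λ * gᵀ).trace = (Λ * Λ * Wᵀ).trace := by
      rw [hgs]
      have e1 : Γ * Λ * W * Λ * g = Γ * (Λ * W * Λ) * g := by simp only [mul_assoc]
      rw [e1, trace_mul_comm, ← mul_assoc, hgΓ, one_mul]
      rw [trace_mul_comm, ← mul_assoc]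
      conv_rhs => rw [← trace_transpose]
      simp only [transpose_mul, transpose_transpose, hΛs]
      rw [trace_mul_comm]
    have hcross2 : (Γ * Λ * g * Λ * Wᵀ).trace = (Λ * Λ * Wᵀ).trace := by rw [hΓΛg]
    have hexp : Γ * Λ * D * Λ * Dᵀ
        = Γ * Λ * W * Λ * Wᵀ - Γ * Λ * W * Λ * gᵀ - Γ * Λ * g * Λ * Wᵀ + Γ * Λ * g * Λ * gᵀ := by
      rw [hD]
      simp only [transpose_sub, Matrix.sub_mul, Matrix.mul_sub]
      abel
    have hW1 : (Γ * Λ * W * Λ * Wᵀ).trace = u^2 * (Γ * Λ * U * Λ * Uᵀ).trace := by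
      rw [hW]
      simp only [transpose_smul, Matrix.mul_smul, Matrix.smul_mul, trace_smul, smul_eq_mul]
      ring
    have hW2 : (Λ * Λ * Wᵀ).trace = u * (Λ * Λ * Uᵀ).trace := by
      rw [hW]
      simp only [transpose_smul, Matrix.mul_smul, trace_smul, smul_eq_mul]
    rw [hRHS] at h1
    rw [trace_sub, trace_smul, trace_smul, smul_eq_mul, smul_eq_mul] at h1
    rw [hexp, trace_add, trace_sub, trace_sub, hcross1, hcross2, ht3, hW1, hW2]
    nlinarith [h1]
  have hT := hΛ.posSemidef
  have hS := hMpos.posSemidef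
  set T := hT.sqrt with hTdef
  set S := hS.sqrt with hSdef
  have hTT : T * T = Λ := hT.sqrt_mul_self
  have hSS : S * S = Γ * Λ := hS.sqrt_mul_self
  have hTs : Tᵀ = T := myHerm_transpose hT.posSemidef_sqrt.1
  have hSs : Sᵀ = S := myHerm_transpose hS.posSemidef_sqrt.1
  set Y := S * D * T with hY
  have hYtr : (Y * Yᵀ).trace = (Γ * Λ * D * Λ * Dᵀ).trace := by
    rw [hY, transpose_mul, transpose_mul, hTs, hSs]
    simp only [← mul_assoc]
    rw [mul_assoc (S * D) T T, hTT]
    rw [trace_mul_comm]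
    simp only [← mul_assoc]
    rw [hSS]
  have hYzero : Y = 0 := by
    apply mytrace_sq_eq_zero
    have h0 := mytrace_sq_nonneg Y
    rw [hYtr] at h0 ⊢
    linarith
  have hTdet : IsUnit T.det := by
    have h : T.det * T.det = Λ.det := by rw [← det_mul, hTT]
    refine isUnit_iff_ne_zero.mpr fun hz => ?_
    rw [hz, mul_zero] at h
    exact hΛ.det_pos.ne' h.symm
  have hSdet : IsUnit S.det := by
    have h : S.det * S.det = (Γ * Λ).det := by rw [← det_mul, hSS]
    refine isUnit_iff_ne_zero.mpr fun hz => ?_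
    rw [hz, mul_zero] at h
    exact hMpos.det_pos.ne' h.symm
  have h1 : S⁻¹ * Y * T⁻¹ = D := by
    rw [hY]
    simp only [← mul_assoc]
    rw [nonsing_inv_mul _ hSdet, one_mul, mul_assoc, mul_nonsing_inv _ hTdet, mul_one]
  rw [hYzero] at h1
  simp only [Matrix.mul_zero, Matrix.zero_mul] at h1
  have hDzero : W - g = 0 := by rw [← hD, ← h1]
  exact sub_eq_zero.mp hDzero
end

section
/- Consider the gradient flow $\frac{d}{dt}U(t) = -u(t)^2\,\Gamma\Lambda\, U(t)\,\Lambda + u(t)\,\Lambda^2$ and $\frac{d}{dt}u(t) = -\operatorname{tr}\big[u(t)\,\Gamma\Lambda\, U(t)\,\Lambda\, U(t)^\top - \Lambda^2 U(t)^\top\big]$ on $\mathbb{R}^{d\times d}\times\mathbb{R}$, where $\Gamma, \Lambda$ are commuting symmetric positive definite matrices. If the initial condition satisfies $u(0)^2 = \operatorname{tr}[U(0) U(0)^\top]$, then for all $t \ge 0$, $u(t)^2 = \operatorname{tr}[U(t) U(t)^\top]$. -/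
open Matrix

/-- The balancedness quantity `u(t)² - tr[U(t)U(t)ᵀ]` is conserved along the gradient flow
`U' = -u²ΓΛUΛ + uΛ²`, `u' = -tr[uΓΛUΛUᵀ - Λ²Uᵀ]`. -/
theorem balancedness_conserved {d : ℕ}
    (Λ Γ : Matrix (Fin d) (Fin d) ℝ) (hΛ : Λ.PosDef) (hΓ : Γ.PosDef)
    (hcomm : Γ * Λ = Λ * Γ)
    (U : ℝ → Matrix (Fin d) (Fin d) ℝ) (u : ℝ → ℝ)
    (hU : ∀ t (i j : Fin d), HasDerivAt (fun s => U s i j)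
      (((-(u t)^2) • (Γ * Λ * U t * Λ) + (u t) • (Λ * Λ)) i j) t)
    (hu : ∀ t, HasDerivAt u
      (-(((u t) • (Γ * Λ * U t * Λ * (U t)ᵀ) - Λ * Λ * (U t)ᵀ).trace)) t)
    (hinit : (u 0)^2 = (U 0 * (U 0)ᵀ).trace) :
    ∀ t, 0 ≤ t → (u t)^2 = (U t * (U t)ᵀ).trace := by
  set D : ℝ → Matrix (Fin d) (Fin d) ℝ :=
    fun t => (-(u t)^2) • (Γ * Λ * U t * Λ) + (u t) • (Λ * Λ) with hD
  set f : ℝ → ℝ := fun t => (u t)^2 - (U t * (U t)ᵀ).trace with hf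
  have hderiv : ∀ t, HasDerivAt f 0 t := by
    intro t
    have h1 : HasDerivAt (fun s => (u s)^2)
        (2 * u t * (-(((u t) • (Γ * Λ * U t * Λ * (U t)ᵀ) - Λ * Λ * (U t)ᵀ).trace))) t := by
      have : HasDerivAt (fun s => u s ^ 2) _ t := ((hu t).pow 2)
      simpa [mul_comm, mul_assoc, mul_left_comm] using this
    have h2 : HasDerivAt (fun s => (U s * (U s)ᵀ).trace)
        (∑ i, ∑ j, (D t i j * U t i j + U t i j * D t i j)) t := by
      have heq : (fun s => (U s * (U s)ᵀ).trace)
          = fun s => ∑ i, ∑ j, U s i j * U s i j := by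
        funext s
        simp [Matrix.trace, Matrix.mul_apply, Matrix.diag]
      rw [heq]
      exact HasDerivAt.fun_sum fun i _ => HasDerivAt.fun_sum fun j _ => (hU t i j).mul (hU t i j)
    have key : 2 * u t * (-(((u t) • (Γ * Λ * U t * Λ * (U t)ᵀ) - Λ * Λ * (U t)ᵀ).trace))
        = ∑ i, ∑ j, (D t i j * U t i j + U t i j * D t i j) := by
      have hsum : ∑ i, ∑ j, (D t i j * U t i j + U t i j * D t i j)
          = 2 * (D t * (U t)ᵀ).trace := by
        simp only [Matrix.trace, Matrix.mul_apply, Matrix.transpose_apply, Matrix.diag,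
          Finset.mul_sum]
        refine Finset.sum_congr rfl fun i _ => Finset.sum_congr rfl fun j _ => by ring
      rw [hsum, hD]
      simp only [Matrix.add_mul, Matrix.smul_mul, Matrix.trace_add, Matrix.trace_smul,
        Matrix.trace_sub, smul_eq_mul, Matrix.mul_assoc]
      ring
    have : HasDerivAt (fun s => u s ^ 2 - (U s * (U s)ᵀ).trace) _ t := h1.sub h2
    rw [key] at this
    simpa [hf] using this
  have hdiff : Differentiable ℝ f := fun t => (hderiv t).differentiableAt
  intro t _
  have hconst : f t = f 0 :=
    is_const_of_deriv_eq_zero hdiff (fun x => (hderiv x).deriv) t 0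
  have h0 : f 0 = 0 := by simp [hf, hinit]
  have : f t = 0 := hconst.trans h0
  have := sub_eq_zero.mp this
  simpa [hf] using this
end

section
/- Let $\sigma > 0$, let $\Theta \in \mathbb{R}^{d\times d}$ with $\|\Theta\Theta^\top\|_F = 1$ and $\Lambda\Theta \neq 0$, where $\Lambda$ is symmetric positive definite, and let $\Gamma$ be symmetric positive definite and commuting with $\Lambda$. If $\sigma^2 < \frac{2}{\sqrt{d}\,\|\Gamma\|_{op}}$, then $\tilde\ell(\sigma\Theta\Theta^\top, \sigma) < 0$, where $\tilde\ell(U,u) = \operatorname{tr}\big[\tfrac{1}{2}u^2\Gamma\Lambda U\Lambda U^\top - u\Lambda^2 U^\top\big]$. -/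
set_option maxHeartbeats 1000000

open Matrix

/-- Operator (spectral) norm of a real square matrix. -/
noncomputable def matrixOpNorm {d : ℕ} (A : Matrix (Fin d) (Fin d) ℝ) : ℝ :=
  ‖LinearMap.toContinuousLinearMap (Matrix.toEuclideanLin A)‖

lemma cs_nested {α β : Type*} [Fintype α] [Fintype β] (f g : α → β → ℝ) :
    (∑ i, ∑ j, f i j * g i j)^2 ≤ (∑ i, ∑ j, f i j ^2) * (∑ i, ∑ j, g i j ^2) := by
  have := Finset.sum_mul_sq_le_sq_mul_sq Finset.univ
    (fun p : α × β => f p.1 p.2) (fun p => g p.1 p.2)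
  simpa [Fintype.sum_prod_type] using this

lemma opnorm_mulVec {d : ℕ} (Γ : Matrix (Fin d) (Fin d) ℝ) (v : Fin d → ℝ) :
    ∑ i, (Γ *ᵥ v) i ^ 2 ≤ (matrixOpNorm Γ)^2 * ∑ i, v i ^ 2 := by
  have h := (LinearMap.toContinuousLinearMap (Matrix.toEuclideanLin Γ)).le_opNorm
    ((WithLp.equiv 2 (Fin d → ℝ)).symm v)
  simp only [LinearMap.coe_toContinuousLinearMap', WithLp.equiv_symm_apply, Matrix.toEuclideanLin_toLp,
    Matrix.toLin'_apply] at h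
  rw [EuclideanSpace.norm_eq, EuclideanSpace.norm_eq] at h
  simp only [WithLp.ofLp_toLp, PiLp.toLp_apply, Real.norm_eq_abs, sq_abs] at h
  have ha : 0 ≤ ∑ i, (Γ *ᵥ v) i ^2 := by positivity
  have hb : 0 ≤ ∑ i, v i ^2 := by positivity
  have h2 := pow_le_pow_left₀ (Real.sqrt_nonneg _) h 2
  rw [Real.sq_sqrt ha, mul_pow, Real.sq_sqrt hb] at h2
  exact h2.trans_eq (by rw [matrixOpNorm])

lemma trace_mul_entries {d : ℕ} (P Q : Matrix (Fin d) (Fin d) ℝ) :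
    (P * Q).trace = ∑ i, ∑ j, P i j * Q j i := by
  simp [Matrix.trace, Matrix.diag, Matrix.mul_apply]

lemma trace_self_transpose {d : ℕ} (A : Matrix (Fin d) (Fin d) ℝ) :
    (A * Aᵀ).trace = ∑ i, ∑ j, A i j ^2 := by
  simp [Matrix.trace, Matrix.diag, Matrix.mul_apply, sq]

/-- At the balanced initialization `(σΘΘᵀ, σ)` with small enough `σ`, the loss
`ℓ̃(U,u) = tr[½u²ΓΛUΛUᵀ - uΛ²Uᵀ]` is strictly negative. -/
theorem init_loss_neg {d : ℕ}
    (Λ Γ Θ : Matrix (Fin d) (Fin d) ℝ) (hΛ : Λ.PosDef) (hΓ : Γ.PosDef)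
    (hcomm : Γ * Λ = Λ * Γ)
    (hΘnorm : Real.sqrt (((Θ * Θᵀ) * (Θ * Θᵀ)ᵀ).trace) = 1)
    (hΛΘ : Λ * Θ ≠ 0)
    (σ : ℝ) (hσ : 0 < σ)
    (hσ2 : σ^2 < 2 / (Real.sqrt d * matrixOpNorm Γ)) :
    ((1/2 * σ^2) • (Γ * Λ * (σ • (Θ * Θᵀ)) * Λ * (σ • (Θ * Θᵀ))ᵀ)
      - σ • (Λ * Λ * (σ • (Θ * Θᵀ))ᵀ)).trace < 0 := by
  classical
  set c := matrixOpNorm Γ with hc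
  have hcnn : 0 ≤ c := norm_nonneg _
  have hMT : (Θ * Θᵀ)ᵀ = Θ * Θᵀ := by
    rw [Matrix.transpose_mul, Matrix.transpose_transpose]
  have hΛT : Λᵀ = Λ := by
    have := hΛ.1.eq
    simpa using this
  -- reduce the goal to a statement about two traces
  have hG : ((1/2 * σ^2) • (Γ * Λ * (σ • (Θ * Θᵀ)) * Λ * (σ • (Θ * Θᵀ))ᵀ)
      - σ • (Λ * Λ * (σ • (Θ * Θᵀ))ᵀ)).trace
      = (1/2*σ^2*σ^2) * (Γ * Λ * (Θ * Θᵀ) * Λ * (Θ * Θᵀ)).trace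
        - (σ*σ) * (Λ * Λ * (Θ * Θᵀ)).trace := by
    simp only [Matrix.transpose_smul, hMT, Matrix.mul_smul, Matrix.smul_mul, smul_smul,
      Matrix.trace_sub, Matrix.trace_smul, smul_eq_mul]
    ring
  rw [hG]
  set T1 := (Γ * Λ * (Θ * Θᵀ) * Λ * (Θ * Θᵀ)).trace with hT1def
  set T2 := (Λ * Λ * (Θ * Θᵀ)).trace with hT2def
  set s := ∑ i, ∑ j, (Λ * (Θ * Θᵀ)) i j ^ 2 with hsdef
  set a := ∑ i, ∑ j, (Λ * Θ) i j ^ 2 with hadef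
  set b := ∑ i, ∑ j, Θ i j ^ 2 with hbdef
  -- T2 = a
  have hT2a : T2 = a := by
    calc T2 = (Λ * (Λ * Θ * Θᵀ)).trace := by
          rw [hT2def, show Λ * Λ * (Θ * Θᵀ) = Λ * (Λ * Θ * Θᵀ) by simp [Matrix.mul_assoc]]
      _ = ((Λ * Θ * Θᵀ) * Λ).trace := Matrix.trace_mul_comm _ _
      _ = ((Λ * Θ) * (Λ * Θ)ᵀ).trace := by
          rw [Matrix.transpose_mul, hΛT, Matrix.mul_assoc]
      _ = a := trace_self_transpose _
  -- a > 0
  have hapos : 0 < a := by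
    have hex : ∃ i j, (Λ * Θ) i j ≠ 0 := by
      by_contra h
      push_neg at h
      exact hΛΘ (Matrix.ext fun i j => h i j)
    obtain ⟨i, j, hij⟩ := hex
    have h1 : (0:ℝ) < ∑ k, (Λ * Θ) i k ^ 2 := by
      have : (0:ℝ) < (Λ * Θ) i j ^ 2 := by positivity
      calc (0:ℝ) < (Λ * Θ) i j ^ 2 := this
        _ ≤ ∑ k, (Λ * Θ) i k ^ 2 :=
            Finset.single_le_sum (f := fun k => (Λ * Θ) i k ^ 2)
              (fun k _ => sq_nonneg _) (Finset.mem_univ j)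
    calc (0:ℝ) < ∑ k, (Λ * Θ) i k ^ 2 := h1
      _ ≤ a := by
          rw [hadef]
          exact Finset.single_le_sum (f := fun i => ∑ j, (Λ * Θ) i j ^ 2)
            (fun k _ => Finset.sum_nonneg fun l _ => sq_nonneg _) (Finset.mem_univ i)
  -- b ≤ √d
  have hMM : ((Θ * Θᵀ) * (Θ * Θᵀ)ᵀ).trace = 1 := Real.sqrt_eq_one.mp hΘnorm
  have hsum1 : ∑ i, ∑ j, (Θ * Θᵀ) i j ^ 2 = 1 := by
    rw [← trace_self_transpose]; exact hMM
  have hbnn : 0 ≤ b := by positivity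
  have hbtr : b = ∑ i, (Θ * Θᵀ) i i := by
    have := trace_self_transpose Θ
    rw [hbdef, ← this]
    simp [Matrix.trace, Matrix.diag]
  have hbd : b ≤ Real.sqrt d := by
    have hcs := Finset.sum_mul_sq_le_sq_mul_sq Finset.univ
      (fun i : Fin d => (Θ * Θᵀ) i i) (fun _ => (1:ℝ))
    have hdiag : ∑ i, (Θ * Θᵀ) i i ^ 2 ≤ ∑ i, ∑ j, (Θ * Θᵀ) i j ^ 2 :=
      Finset.sum_le_sum fun i _ =>
        Finset.single_le_sum (f := fun j => (Θ * Θᵀ) i j ^ 2)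
          (fun j _ => sq_nonneg _) (Finset.mem_univ i)
    have hb2 : b ^ 2 ≤ d := by
      rw [hbtr]
      calc (∑ i, (Θ * Θᵀ) i i) ^ 2 = (∑ i, (Θ * Θᵀ) i i * 1) ^ 2 := by simp
        _ ≤ (∑ i, (Θ * Θᵀ) i i ^ 2) * ∑ _i : Fin d, (1:ℝ)^2 := hcs
        _ ≤ 1 * d := by
            rw [hsum1] at hdiag
            apply mul_le_mul hdiag (by simp) (by positivity) (by norm_num)
        _ = d := one_mul _
    calc b = Real.sqrt (b ^ 2) := (Real.sqrt_sq hbnn).symm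
      _ ≤ Real.sqrt d := Real.sqrt_le_sqrt hb2
  -- s ≤ a * b
  have hsab : s ≤ a * b := by
    have hentry : ∀ i j, (Λ * (Θ * Θᵀ)) i j ^ 2
        ≤ (∑ k, (Λ * Θ) i k ^ 2) * (∑ k, Θ j k ^ 2) := by
      intro i j
      have he : (Λ * (Θ * Θᵀ)) i j = ∑ k, (Λ * Θ) i k * Θ j k := by
        rw [show Λ * (Θ * Θᵀ) = (Λ * Θ) * Θᵀ by rw [Matrix.mul_assoc]]
        simp [Matrix.mul_apply, Matrix.transpose_apply]
      rw [he]
      exact Finset.sum_mul_sq_le_sq_mul_sq Finset.univ _ _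
    calc s ≤ ∑ i, ∑ j, (∑ k, (Λ * Θ) i k ^ 2) * (∑ k, Θ j k ^ 2) :=
          Finset.sum_le_sum fun i _ => Finset.sum_le_sum fun j _ => hentry i j
      _ = a * b := by rw [← Finset.sum_mul_sum]
  -- q ≤ c² s
  set q := ∑ i, ∑ j, (Γ * (Λ * (Θ * Θᵀ))) i j ^ 2 with hqdef
  have hqc : q ≤ c ^ 2 * s := by
    have hswap : q = ∑ j, ∑ i, (Γ * (Λ * (Θ * Θᵀ))) i j ^ 2 := Finset.sum_comm
    have hcol : ∀ j, ∑ i, (Γ * (Λ * (Θ * Θᵀ))) i j ^ 2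
        ≤ c ^ 2 * ∑ i, (Λ * (Θ * Θᵀ)) i j ^ 2 := by
      intro j
      have he : ∀ i, (Γ * (Λ * (Θ * Θᵀ))) i j
          = (Γ *ᵥ (fun k => (Λ * (Θ * Θᵀ)) k j)) i := by
        intro i
        simp [Matrix.mul_apply, Matrix.mulVec, dotProduct]
      calc ∑ i, (Γ * (Λ * (Θ * Θᵀ))) i j ^ 2
          = ∑ i, (Γ *ᵥ (fun k => (Λ * (Θ * Θᵀ)) k j)) i ^ 2 := by
            exact Finset.sum_congr rfl fun i _ => by rw [he i]
        _ ≤ c ^ 2 * ∑ i, (Λ * (Θ * Θᵀ)) i j ^ 2 := opnorm_mulVec Γ _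
    calc q = ∑ j, ∑ i, (Γ * (Λ * (Θ * Θᵀ))) i j ^ 2 := hswap
      _ ≤ ∑ j, c ^ 2 * ∑ i, (Λ * (Θ * Θᵀ)) i j ^ 2 := Finset.sum_le_sum fun j _ => hcol j
      _ = c ^ 2 * ∑ j, ∑ i, (Λ * (Θ * Θᵀ)) i j ^ 2 := by rw [Finset.mul_sum]
      _ = c ^ 2 * s := by rw [hsdef]; congr 1; exact Finset.sum_comm
  -- T1 ≤ c * s
  have hsnn : 0 ≤ s := by positivity
  have hT1cs : T1 ≤ c * s := by
    have hassoc : Γ * Λ * (Θ * Θᵀ) * Λ * (Θ * Θᵀ)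
        = (Γ * (Λ * (Θ * Θᵀ))) * (Λ * (Θ * Θᵀ)) := by simp [Matrix.mul_assoc]
    have hTe : T1 = ∑ i, ∑ j, (Γ * (Λ * (Θ * Θᵀ))) i j * (Λ * (Θ * Θᵀ)) j i := by
      rw [hT1def, hassoc, trace_mul_entries]
    have hcs2 := cs_nested (fun i j => (Γ * (Λ * (Θ * Θᵀ))) i j)
      (fun i j => (Λ * (Θ * Θᵀ)) j i)
    have hsq : T1 ^ 2 ≤ q * s := by
      rw [hTe]
      calc (∑ i, ∑ j, (Γ * (Λ * (Θ * Θᵀ))) i j * (Λ * (Θ * Θᵀ)) j i) ^ 2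
          ≤ (∑ i, ∑ j, (Γ * (Λ * (Θ * Θᵀ))) i j ^ 2)
            * (∑ i, ∑ j, (Λ * (Θ * Θᵀ)) j i ^ 2) := hcs2
        _ = q * s := by rw [hqdef, hsdef]; congr 1; exact Finset.sum_comm
    have hsq2 : T1 ^ 2 ≤ (c * s) ^ 2 := by
      calc T1 ^ 2 ≤ q * s := hsq
        _ ≤ (c ^ 2 * s) * s := mul_le_mul_of_nonneg_right hqc hsnn
        _ = (c * s) ^ 2 := by ring
    have hcsnn : 0 ≤ c * s := mul_nonneg hcnn hsnn
    nlinarith [hsq2, hcsnn]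
  -- positivity of √d * c
  have hd0 : 0 < Real.sqrt d * c := by
    by_contra h
    push_neg at h
    have h2 : 2 / (Real.sqrt d * c) ≤ 0 := div_nonpos_of_nonneg_of_nonpos (by norm_num) h
    nlinarith [pow_pos hσ 2]
  have hσc : σ ^ 2 * (Real.sqrt d * c) < 2 := by
    rw [lt_div_iff₀ hd0] at hσ2; exact hσ2
  -- combine
  have hT1fin : T1 ≤ Real.sqrt d * c * a := by
    have hann : 0 ≤ a := le_of_lt hapos
    calc T1 ≤ c * s := hT1cs
      _ ≤ c * (a * b) := mul_le_mul_of_nonneg_left hsab hcnn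
      _ ≤ c * (a * Real.sqrt d) := by
          apply mul_le_mul_of_nonneg_left _ hcnn
          exact mul_le_mul_of_nonneg_left hbd hann
      _ = Real.sqrt d * c * a := by ring
  rw [hT2a]
  have hσ2pos : 0 < σ ^ 2 := pow_pos hσ 2
  nlinarith [mul_lt_mul_of_pos_right hσc hapos,
    mul_le_mul_of_nonneg_left hT1fin (le_of_lt hσ2pos),
    mul_pos hσ2pos hapos, sq_nonneg σ]
end

section
/- Let $\Lambda$ be symmetric positive definite, $\Gamma = \tfrac{N+1}{N}\Lambda + \tfrac{1}{N}\operatorname{tr}(\Lambda)I_d$, and $\tilde\ell(U,u) = \operatorname{tr}\big[\tfrac{1}{2}u^2\Gamma\Lambda U\Lambda U^\top - u\Lambda^2 U^\top\big]$. For any $(U, u)$ with $u \ge c > 0$, the gradient satisfies $\big\|u^2\Gamma\Lambda U\Lambda - u\Lambda^2\big\|_F^2 \ge \frac{c^2}{\operatorname{tr}(\Gamma^{-1}\Lambda^{-1})\operatorname{tr}(\Lambda^{-1})}\Big(\tilde\ell(U,u) + \tfrac{1}{2}\operatorname{tr}(\Lambda^2\Gamma^{-1})\Big)$. -/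
open Matrix

set_option linter.unusedSectionVars false
set_option maxHeartbeats 1000000

namespace PLaux

variable {n : Type*} [Fintype n] [DecidableEq n]

lemma diag_nonneg {P : Matrix n n ℝ} (hP : P.PosSemidef) (i : n) : 0 ≤ P i i := by
  have h := hP.diag_nonneg (i := i)
  simpa [Matrix.mulVec_single] using h

lemma trace_nonneg' {P : Matrix n n ℝ} (hP : P.PosSemidef) : 0 ≤ P.trace := by
  rw [Matrix.trace]
  exact Finset.sum_nonneg fun i _ => diag_nonneg hP i

lemma diag_pos {P : Matrix n n ℝ} (hP : P.PosDef) (i : n) : 0 < P i i := by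
  have hx : (Pi.single i 1 : n → ℝ) ≠ 0 := by
    intro h
    have h1 := congrFun h i
    simp at h1
  have h := hP.diag_pos (i := i)
  simpa [Matrix.mulVec_single] using h

lemma trace_pos' [Nonempty n] {P : Matrix n n ℝ} (hP : P.PosDef) : 0 < P.trace := by
  rw [Matrix.trace]
  exact Finset.sum_pos (fun i _ => diag_pos hP i) Finset.univ_nonempty

lemma trace_mul_nonneg' {A B : Matrix n n ℝ} (hA : A.PosSemidef) (hB : B.PosSemidef) :
    0 ≤ (A * B).trace := by
  obtain ⟨C, hC⟩ : ∃ C : Matrix n n ℝ, B = Cᴴ * C := by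
    open scoped MatrixOrder in
    obtain ⟨C, hC⟩ := CStarAlgebra.nonneg_iff_eq_star_mul_self.mp hB.nonneg
    exact ⟨C, hC⟩
  have h1 : (A * B).trace = (C * A * Cᴴ).trace := by
    rw [hC, ← Matrix.mul_assoc, Matrix.trace_mul_cycle]
  rw [h1]
  exact trace_nonneg' (hA.mul_mul_conjTranspose_same C)

lemma quad_le (C : Matrix n n ℝ) (x : n → ℝ) :
    (C *ᵥ x) ⬝ᵥ (C *ᵥ x) ≤ (Cᴴ * C).trace * (x ⬝ᵥ x) := by
  have h : ∀ j, (C *ᵥ x) j ^ 2 ≤ (∑ i, C j i ^ 2) * (x ⬝ᵥ x) := by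
    intro j
    have h2 := Finset.sum_mul_sq_le_sq_mul_sq Finset.univ (fun i => C j i) x
    simpa [Matrix.mulVec, dotProduct, sq] using h2
  calc (C *ᵥ x) ⬝ᵥ (C *ᵥ x) = ∑ j, (C *ᵥ x) j ^ 2 := by
        simp [dotProduct, sq]
    _ ≤ ∑ j, (∑ i, C j i ^ 2) * (x ⬝ᵥ x) := Finset.sum_le_sum fun j _ => h j
    _ = (Cᴴ * C).trace * (x ⬝ᵥ x) := by
        rw [← Finset.sum_mul]
        congr 1
        rw [Matrix.trace, Finset.sum_comm]
        simp [Matrix.mul_apply, sq, Matrix.conjTranspose_apply]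

lemma sub_psd {P : Matrix n n ℝ} (hP : P.PosSemidef) :
    (P.trace • (1 : Matrix n n ℝ) - P).PosSemidef := by
  obtain ⟨C, hC⟩ : ∃ C : Matrix n n ℝ, P = Cᴴ * C := by
    open scoped MatrixOrder in
    obtain ⟨C, hC⟩ := CStarAlgebra.nonneg_iff_eq_star_mul_self.mp hP.nonneg
    exact ⟨C, hC⟩
  have hPT : Pᵀ = P := by
    rw [← Matrix.conjTranspose_eq_transpose_of_trivial]; exact hP.1
  refine Matrix.PosSemidef.of_dotProduct_mulVec_nonneg ?_ ?_
  · simp [Matrix.IsHermitian, Matrix.conjTranspose_smul, sub_eq_add_neg,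
      Matrix.conjTranspose_add, hP.1.eq, hPT]
  · intro x
    have h1 : star x ⬝ᵥ (P *ᵥ x) = (C *ᵥ x) ⬝ᵥ (C *ᵥ x) := by
      rw [hC, ← Matrix.mulVec_mulVec, Matrix.dotProduct_mulVec, Matrix.vecMul_conjTranspose,
        star_star]
      simp
    have h2 := quad_le C x
    rw [← hC] at h2
    have h3 : star x ⬝ᵥ ((P.trace • (1 : Matrix n n ℝ) - P) *ᵥ x)
        = P.trace * (x ⬝ᵥ x) - star x ⬝ᵥ (P *ᵥ x) := by
      rw [Matrix.sub_mulVec, dotProduct_sub]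
      congr 1
      rw [Matrix.smul_mulVec, Matrix.one_mulVec, dotProduct_smul]
      simp [smul_eq_mul]
    rw [h3, h1]
    simpa using h2

lemma trace_quad_le {A B : Matrix n n ℝ} (X : Matrix n n ℝ)
    (hA : A.PosSemidef) (hB : B.PosSemidef) :
    (X * A * Xᵀ * B).trace ≤ A.trace * B.trace * (X * Xᵀ).trace := by
  have hXT : Xᴴ = Xᵀ := Matrix.conjTranspose_eq_transpose_of_trivial X
  have hXXT : (X * Xᵀ).PosSemidef := by
    have := Matrix.posSemidef_self_mul_conjTranspose X
    rwa [hXT] at this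
  have h1 : (X * A * Xᵀ * B).trace ≤ A.trace * (X * Xᵀ * B).trace := by
    have hpsd : (X * (A.trace • 1 - A) * Xᵀ).PosSemidef := by
      have := (sub_psd hA).mul_mul_conjTranspose_same X
      rwa [hXT] at this
    have h := trace_mul_nonneg' hpsd hB
    have he : X * (A.trace • (1 : Matrix n n ℝ) - A) * Xᵀ * B
        = A.trace • (X * Xᵀ * B) - X * A * Xᵀ * B := by
      simp only [Matrix.mul_sub, Matrix.sub_mul, Matrix.mul_smul, Matrix.smul_mul,
        Matrix.mul_one]
    rw [he, Matrix.trace_sub, Matrix.trace_smul, smul_eq_mul] at h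
    linarith
  have h2 : (X * Xᵀ * B).trace ≤ B.trace * (X * Xᵀ).trace := by
    have h := trace_mul_nonneg' hXXT (sub_psd hB)
    have he : (X * Xᵀ) * (B.trace • (1 : Matrix n n ℝ) - B)
        = B.trace • (X * Xᵀ) - X * Xᵀ * B := by
      simp only [Matrix.mul_sub, Matrix.mul_smul, Matrix.mul_one]
    rw [he, Matrix.trace_sub, Matrix.trace_smul, smul_eq_mul] at h
    linarith
  calc (X * A * Xᵀ * B).trace ≤ A.trace * (X * Xᵀ * B).trace := h1
    _ ≤ A.trace * (B.trace * (X * Xᵀ).trace) :=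
        mul_le_mul_of_nonneg_left h2 (trace_nonneg' hA)
    _ = A.trace * B.trace * (X * Xᵀ).trace := by ring

end PLaux

/-- Polyak–Łojasiewicz-type inequality on the region `u ≥ c > 0`:
`‖u²ΓΛUΛ - uΛ²‖_F² ≥ (c²/(tr(Γ⁻¹Λ⁻¹)tr(Λ⁻¹))) (ℓ̃(U,u) + ½tr(Λ²Γ⁻¹))`. -/
theorem pl_inequality {d : ℕ} (N : ℕ) (hN : 1 ≤ N)
    (Λ Γ : Matrix (Fin d) (Fin d) ℝ) (hΛ : Λ.PosDef)
    (hΓdef : Γ = (1 + (N : ℝ)⁻¹) • Λ + ((N : ℝ)⁻¹ * Λ.trace) • (1 : Matrix (Fin d) (Fin d) ℝ))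
    (U : Matrix (Fin d) (Fin d) ℝ) (u c : ℝ) (hc : 0 < c) (hu : c ≤ u) :
    (c^2 / ((Γ⁻¹ * Λ⁻¹).trace * (Λ⁻¹).trace)) *
        (((1/2 * u^2) • (Γ * Λ * U * Λ * Uᵀ) - u • (Λ * Λ * Uᵀ)).trace
          + 1/2 * (Λ * Λ * Γ⁻¹).trace)
      ≤ ((u^2 • (Γ * Λ * U * Λ) - u • (Λ * Λ))
          * (u^2 • (Γ * Λ * U * Λ) - u • (Λ * Λ))ᵀ).trace := by
  rcases Nat.eq_zero_or_pos d with hd | hd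
  · subst hd
    simp [Matrix.trace]
  haveI : Nonempty (Fin d) := ⟨⟨0, hd⟩⟩
  -- basic positivity
  have hNR : (0:ℝ) < (N:ℝ)⁻¹ := by
    have : (0:ℝ) < (N:ℝ) := by exact_mod_cast Nat.lt_of_lt_of_le Nat.zero_lt_one hN
    positivity
  have htrΛ : 0 < Λ.trace := PLaux.trace_pos' hΛ
  have hα : (0:ℝ) < 1 + (N:ℝ)⁻¹ := by linarith
  have hβ : (0:ℝ) < (N:ℝ)⁻¹ * Λ.trace := mul_pos hNR htrΛ
  have hΛT : Λᵀ = Λ := by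
    rw [← Matrix.conjTranspose_eq_transpose_of_trivial]; exact hΛ.1
  -- Γ is positive definite
  have hΓ : Γ.PosDef := by
    refine Matrix.PosDef.of_dotProduct_mulVec_pos ?_ ?_
    · rw [hΓdef]
      simp [Matrix.IsHermitian, Matrix.conjTranspose_add, Matrix.conjTranspose_smul, hΛ.1.eq, hΛT]
    · intro x hx
      have h1 := hΛ.dotProduct_mulVec_pos hx
      have hxx : 0 < star x ⬝ᵥ x := by
        have : x ⬝ᵥ x ≠ 0 := by
          intro h
          exact hx ((dotProduct_self_eq_zero).mp h)
        have h2 : 0 ≤ x ⬝ᵥ x := Finset.sum_nonneg fun i _ => mul_self_nonneg _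
        simpa using lt_of_le_of_ne h2 (Ne.symm this)
      rw [hΓdef]
      rw [Matrix.add_mulVec, Matrix.smul_mulVec, Matrix.smul_mulVec,
        Matrix.one_mulVec, dotProduct_add, dotProduct_smul,
        dotProduct_smul]
      simp only [smul_eq_mul]
      have hxx' : 0 < star x ⬝ᵥ x := hxx
      nlinarith [h1, hxx']
  -- commutation
  have hcomm : Γ * Λ = Λ * Γ := by
    rw [hΓdef]
    simp [Matrix.add_mul, Matrix.mul_add, Matrix.smul_mul, Matrix.mul_smul]
  -- Λ * Γ is positive definite
  have hΛΓ : (Λ * Γ).PosDef := by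
    refine Matrix.PosDef.of_dotProduct_mulVec_pos ?_ ?_
    · show (Λ * Γ)ᴴ = Λ * Γ
      rw [Matrix.conjTranspose_mul, hΓ.1.eq, hΛ.1.eq, hcomm]
    · intro x hx
      have h1 := hΛ.dotProduct_mulVec_pos hx
      rw [hΓdef]
      have hexp : Λ * ((1 + (N:ℝ)⁻¹) • Λ + ((N:ℝ)⁻¹ * Λ.trace) • (1 : Matrix (Fin d) (Fin d) ℝ))
          = (1 + (N:ℝ)⁻¹) • (Λ * Λ) + ((N:ℝ)⁻¹ * Λ.trace) • Λ := by
        simp [Matrix.mul_add, Matrix.mul_smul]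
      rw [hexp, Matrix.add_mulVec, Matrix.smul_mulVec, Matrix.smul_mulVec,
        dotProduct_add, dotProduct_smul, dotProduct_smul]
      simp only [smul_eq_mul]
      have hLL : star x ⬝ᵥ ((Λ * Λ) *ᵥ x) = (Λ *ᵥ x) ⬝ᵥ (Λ *ᵥ x) := by
        rw [← Matrix.mulVec_mulVec, Matrix.dotProduct_mulVec]
        congr 1
        rw [← Matrix.mulVec_transpose, hΛT]
        simp
      rw [hLL]
      have hq : 0 ≤ (Λ *ᵥ x) ⬝ᵥ (Λ *ᵥ x) := Finset.sum_nonneg fun i _ => mul_self_nonneg _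
      nlinarith [h1, hq]
  -- invertibility
  have hdΛ : IsUnit Λ.det := isUnit_iff_ne_zero.mpr (ne_of_gt hΛ.det_pos)
  have hdΓ : IsUnit Γ.det := isUnit_iff_ne_zero.mpr (ne_of_gt hΓ.det_pos)
  have hΛ1 : Λ * Λ⁻¹ = 1 := Matrix.mul_nonsing_inv _ hdΛ
  have hΛ2 : Λ⁻¹ * Λ = 1 := Matrix.nonsing_inv_mul _ hdΛ
  have hΓ1 : Γ * Γ⁻¹ = 1 := Matrix.mul_nonsing_inv _ hdΓ
  have hΓ2 : Γ⁻¹ * Γ = 1 := Matrix.nonsing_inv_mul _ hdΓ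
  have hApd : (Λ⁻¹).PosDef := hΛ.inv
  have hBpd : (Γ⁻¹ * Λ⁻¹).PosDef := by
    rw [← Matrix.mul_inv_rev]
    exact hΛΓ.inv
  have ha : 0 < (Λ⁻¹).trace := PLaux.trace_pos' hApd
  have hb : 0 < (Γ⁻¹ * Λ⁻¹).trace := PLaux.trace_pos' hBpd
  have hΓT : Γᵀ = Γ := by
    rw [← Matrix.conjTranspose_eq_transpose_of_trivial]; exact hΓ.1
  have hcomminv : Λ * Γ⁻¹ = Γ⁻¹ * Λ := by
    calc Λ * Γ⁻¹ = (Γ⁻¹ * Γ) * (Λ * Γ⁻¹) := by rw [hΓ2, Matrix.one_mul]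
      _ = Γ⁻¹ * ((Γ * Λ) * Γ⁻¹) := by simp only [Matrix.mul_assoc]
      _ = Γ⁻¹ * ((Λ * Γ) * Γ⁻¹) := by rw [hcomm]
      _ = Γ⁻¹ * (Λ * (Γ * Γ⁻¹)) := by simp only [Matrix.mul_assoc]
      _ = Γ⁻¹ * Λ := by rw [hΓ1, Matrix.mul_one]
  -- rewriting helpers
  have r1 : ∀ M : Matrix (Fin d) (Fin d) ℝ, Λ * (Λ⁻¹ * M) = M := fun M => by
    rw [← Matrix.mul_assoc, hΛ1, Matrix.one_mul]
  have r2 : ∀ M : Matrix (Fin d) (Fin d) ℝ, Λ⁻¹ * (Λ * M) = M := fun M => by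
    rw [← Matrix.mul_assoc, hΛ2, Matrix.one_mul]
  have r3 : ∀ M : Matrix (Fin d) (Fin d) ℝ, Γ * (Γ⁻¹ * M) = M := fun M => by
    rw [← Matrix.mul_assoc, hΓ1, Matrix.one_mul]
  have r4 : ∀ M : Matrix (Fin d) (Fin d) ℝ, Γ⁻¹ * (Γ * M) = M := fun M => by
    rw [← Matrix.mul_assoc, hΓ2, Matrix.one_mul]
  have r5 : ∀ M : Matrix (Fin d) (Fin d) ℝ, Λ * (Γ⁻¹ * M) = Γ⁻¹ * (Λ * M) := fun M => by
    rw [← Matrix.mul_assoc, hcomminv, Matrix.mul_assoc]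
  -- abbreviations
  set t1 : ℝ := (Γ * Λ * U * Λ * Uᵀ).trace with ht1
  set t2 : ℝ := (Λ * Λ * Uᵀ).trace with ht2
  set t3 : ℝ := (Λ * Λ * Γ⁻¹).trace with ht3
  set X : Matrix (Fin d) (Fin d) ℝ := u^2 • (Γ * Λ * U * Λ) - u • (Λ * Λ) with hX
  -- transpose of X
  have hXT : Xᵀ = u^2 • (Λ * (Uᵀ * (Λ * Γ))) - u • (Λ * Λ) := by
    rw [hX]
    simp [Matrix.transpose_sub, Matrix.transpose_smul, Matrix.transpose_mul, hΛT, hΓT,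
      Matrix.mul_assoc]
  -- monomial simplifications
  have m1 : Γ * Λ * U * Λ * Λ⁻¹ * (Λ * (Uᵀ * (Λ * Γ))) * (Γ⁻¹ * Λ⁻¹)
      = Γ * Λ * U * Λ * Uᵀ := by
    simp only [Matrix.mul_assoc, r1, r2, r3, r4, r5, hcomminv, hΛ1, hΛ2, hΓ1, hΓ2,
      Matrix.mul_one, Matrix.one_mul]
  have m2 : Γ * Λ * U * Λ * Λ⁻¹ * (Λ * Λ) * (Γ⁻¹ * Λ⁻¹)
      = Γ * (Λ * (U * (Γ⁻¹ * Λ))) := by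
    simp only [Matrix.mul_assoc, r1, r2, r3, r4, r5, hcomminv, hΛ1, hΛ2, hΓ1, hΓ2,
      Matrix.mul_one, Matrix.one_mul]
  have m3 : Λ * Λ * Λ⁻¹ * (Λ * (Uᵀ * (Λ * Γ))) * (Γ⁻¹ * Λ⁻¹)
      = Λ * (Λ * Uᵀ) := by
    simp only [Matrix.mul_assoc, r1, r2, r3, r4, r5, hcomminv, hΛ1, hΛ2, hΓ1, hΓ2,
      Matrix.mul_one, Matrix.one_mul]
  have m4 : Λ * Λ * Λ⁻¹ * (Λ * Λ) * (Γ⁻¹ * Λ⁻¹)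
      = Γ⁻¹ * (Λ * Λ) := by
    simp only [Matrix.mul_assoc, r1, r2, r3, r4, r5, hcomminv, hΛ1, hΛ2, hΓ1, hΓ2,
      Matrix.mul_one, Matrix.one_mul]
  -- trace values of the monomials
  have e1 : (Γ * Λ * U * Λ * Λ⁻¹ * (Λ * (Uᵀ * (Λ * Γ))) * (Γ⁻¹ * Λ⁻¹)).trace = t1 := by
    rw [m1, ht1]
  have htUt : (Λ * (Λ * U)).trace = t2 := by
    have h1 : (Λ * Λ * Uᵀ)ᵀ = U * (Λ * Λ) := by
      simp [Matrix.transpose_mul, hΛT, Matrix.mul_assoc]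
    rw [ht2, ← Matrix.trace_transpose (Λ * Λ * Uᵀ), h1, Matrix.trace_mul_comm U (Λ * Λ),
      Matrix.mul_assoc]
  have e2 : (Γ * Λ * U * Λ * Λ⁻¹ * (Λ * Λ) * (Γ⁻¹ * Λ⁻¹)).trace = t2 := by
    rw [m2]
    have h1 : Γ * (Λ * (U * (Γ⁻¹ * Λ))) = (Γ * Λ * U) * (Γ⁻¹ * Λ) := by
      simp only [Matrix.mul_assoc]
    rw [h1, Matrix.trace_mul_comm]
    have h2 : Γ⁻¹ * Λ * (Γ * Λ * U) = Λ * (Λ * U) := by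
      calc Γ⁻¹ * Λ * (Γ * Λ * U) = Γ⁻¹ * ((Λ * Γ) * (Λ * U)) := by
            simp only [Matrix.mul_assoc]
        _ = Γ⁻¹ * ((Γ * Λ) * (Λ * U)) := by rw [hcomm]
        _ = Λ * (Λ * U) := by
            simp only [Matrix.mul_assoc]; rw [r4]
    rw [h2, htUt]
  have e3 : (Λ * Λ * Λ⁻¹ * (Λ * (Uᵀ * (Λ * Γ))) * (Γ⁻¹ * Λ⁻¹)).trace = t2 := by
    rw [m3, ← Matrix.mul_assoc]
  have e4 : (Λ * Λ * Λ⁻¹ * (Λ * Λ) * (Γ⁻¹ * Λ⁻¹)).trace = t3 := by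
    rw [m4, Matrix.trace_mul_comm, ht3]
  -- the key trace identity
  have E : (X * Λ⁻¹ * Xᵀ * (Γ⁻¹ * Λ⁻¹)).trace = u^4 * t1 - 2 * u^3 * t2 + u^2 * t3 := by
    rw [hXT, hX]
    simp only [Matrix.sub_mul, Matrix.mul_sub, Matrix.smul_mul, Matrix.mul_smul,
      Matrix.trace_sub, Matrix.trace_smul, smul_eq_mul, smul_smul]
    rw [e1, e2, e3, e4]
    ring
  -- the PL bound
  have hD := PLaux.trace_quad_le X hApd.posSemidef hBpd.posSemidef
  have hS : 0 ≤ (X * Xᵀ).trace := by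
    have hXt : Xᴴ = Xᵀ := Matrix.conjTranspose_eq_transpose_of_trivial X
    have := Matrix.posSemidef_self_mul_conjTranspose X
    rw [hXt] at this
    exact PLaux.trace_nonneg' this
  set S : ℝ := (X * Xᵀ).trace with hSdef
  set a : ℝ := (Λ⁻¹).trace
  set b : ℝ := (Γ⁻¹ * Λ⁻¹).trace
  -- identify the loss value
  have hV : ((1/2 * u^2) • (Γ * Λ * U * Λ * Uᵀ) - u • (Λ * Λ * Uᵀ)).trace
      + 1/2 * (Λ * Λ * Γ⁻¹).trace = (1/2 * u^2) * t1 - u * t2 + 1/2 * t3 := by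
    rw [Matrix.trace_sub, Matrix.trace_smul, Matrix.trace_smul]
    simp only [smul_eq_mul, ht1, ht2, ht3]
    try ring
  rw [hV]
  set V : ℝ := (1/2 * u^2) * t1 - u * t2 + 1/2 * t3 with hVdef
  have key : 2 * u^2 * V ≤ a * b * S := by
    have : 2 * u^2 * V = u^4 * t1 - 2 * u^3 * t2 + u^2 * t3 := by
      rw [hVdef]; ring
    rw [this, ← E]
    exact hD
  have hu2 : c^2 ≤ u^2 := by nlinarith
  rw [div_mul_eq_mul_div, div_le_iff₀ (mul_pos hb ha)]
  rcases le_or_gt 0 V with hVpos | hVneg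
  · have h1 : c^2 * V ≤ u^2 * V := mul_le_mul_of_nonneg_right hu2 hVpos
    have h2 : 0 ≤ u^2 * V := mul_nonneg (by nlinarith) hVpos
    nlinarith
  · have h1 : c^2 * V < 0 := mul_neg_of_pos_of_neg (by positivity) hVneg
    have h2 : 0 ≤ S * (b * a) := mul_nonneg hS (by positivity)
    linarith
end
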